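/- Let Σ ∈ ℝ^{d̄×d̄} be a nonzero positive semidefinite matrix with smallest eigenvalue Λ_min(Σ) = 0, and ρ ∈ ℝ^{d̄} in the column space of Σ. Fix α > 0, let f_α(β) := ‖β‖₁ + (α/2)‖β‖², and β*^{(α)} := argmin{ f_α(β) : Σβ = ρ }. Let X ∈ ℝ^{N×d̄}, ε ∈ ℝ^N, y = Xβ*^{(α)} + ε, and n > 0, and suppose ‖XᵀX/n − Σ‖_∞ ≤ q_n, ‖Xᵀε/n‖_∞ ≤ r_n, and |(1/n)‖ε‖² − σ²| ≤ s_n for some reals q_n, r_n, s_n ≥ 0 and σ² ≥ 0; let A_n = σ² + s_n and M ≥ ‖β*^{(α)}‖₁. Let β̂^{(α)} be a minimizer of f_α over { β : (1/n)‖y − Xβ‖² ≤ A_n, ‖β‖₁ ≤ M }, and let β̂_P be the orthogonal projection of β̂^{(α)} onto {β : Σβ = ρ}. Then ‖β̂_P − β*^{(α)}‖² ≤ 2(√d̄/α + M) v_n^{1/2} + v_n, where v_n := (4 M r_n + 2 s_n + 4 M² q_n) / Λ_min⁺(Σ) and Λ_min⁺(Σ) is the smallest nonzero eigenvalue of Σ.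 -/

import Mathlib

namespace Statement12

/-- The ℓ₁-norm of a vector. -/
noncomputable def l1norm {m : ℕ} (v : Fin m → ℝ) : ℝ := ∑ i, |v i|

/-- The squared Euclidean norm of a vector. -/
def sqnorm {m : ℕ} (v : Fin m → ℝ) : ℝ := ∑ i, (v i) ^ 2

/-- The smallest nonzero eigenvalue of a matrix. -/
noncomputable def lamMinPos {m : ℕ} (S : Matrix (Fin m) (Fin m) ℝ) : ℝ :=
  sInf {c : ℝ | c ≠ 0 ∧ ∃ v : Fin m → ℝ, v ≠ 0 ∧ S.mulVec v = c • v}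

lemma l1norm_nonneg {m : ℕ} (v : Fin m → ℝ) : 0 ≤ l1norm v :=
  Finset.sum_nonneg fun _ _ => abs_nonneg _

lemma sqnorm_nonneg {m : ℕ} (v : Fin m → ℝ) : 0 ≤ sqnorm v :=
  Finset.sum_nonneg fun _ _ => sq_nonneg _

lemma sqnorm_sub {m : ℕ} (a b : Fin m → ℝ) :
    sqnorm (a - b) = sqnorm a - 2 * (∑ k, a k * b k) + sqnorm b := by
  unfold sqnorm
  calc ∑ k, (a k - b k) ^ 2 = ∑ k, (a k ^ 2 - 2 * (a k * b k) + b k ^ 2) :=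
        Finset.sum_congr rfl fun k _ => by ring
    _ = _ := by rw [Finset.sum_add_distrib, Finset.sum_sub_distrib, Finset.mul_sum]

lemma sqnorm_add_smul {m : ℕ} (a u : Fin m → ℝ) (t : ℝ) :
    sqnorm (a + t • u) = sqnorm a + 2 * t * (∑ k, a k * u k) + t ^ 2 * sqnorm u := by
  unfold sqnorm
  calc ∑ k, (a k + t * u k) ^ 2
      = ∑ k, (a k ^ 2 + 2 * t * (a k * u k) + t ^ 2 * u k ^ 2) :=
        Finset.sum_congr rfl fun k _ => by ring
    _ = _ := by
        rw [Finset.sum_add_distrib, Finset.sum_add_distrib, Finset.mul_sum, Finset.mul_sum]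

lemma l1norm_sub_le {m : ℕ} (a b : Fin m → ℝ) : l1norm (a - b) ≤ l1norm a + l1norm b := by
  unfold l1norm
  rw [← Finset.sum_add_distrib]
  refine Finset.sum_le_sum fun k _ => ?_
  calc |a k - b k| = |a k + -(b k)| := by rw [sub_eq_add_neg]
    _ ≤ |a k| + |-(b k)| := abs_add_le _ _
    _ = |a k| + |b k| := by rw [abs_neg]

lemma sq_l1norm_le {m : ℕ} (v : Fin m → ℝ) : (l1norm v) ^ 2 ≤ m * sqnorm v := by
  have h := sq_sum_le_card_mul_sum_sq (s := Finset.univ) (f := fun i => |v i|)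
  simpa [l1norm, sqnorm, sq_abs] using h

lemma sqnorm_le_sq_l1norm {m : ℕ} (v : Fin m → ℝ) : sqnorm v ≤ (l1norm v) ^ 2 := by
  have h := Finset.sum_sq_le_sq_sum_of_nonneg (s := Finset.univ)
    (f := fun i => |v i|) (fun i _ => abs_nonneg _)
  simpa [l1norm, sqnorm, sq_abs] using h

open Matrix in
lemma bilin_comm {m : ℕ} (S : Matrix (Fin m) (Fin m) ℝ) (hs : ∀ i j, S i j = S j i)
    (a b : Fin m → ℝ) : ∑ j, a j * S.mulVec b j = ∑ j, b j * S.mulVec a j := by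
  simp only [Matrix.mulVec, dotProduct]
  calc ∑ j, a j * ∑ i, S j i * b i = ∑ j, ∑ i, a j * (S j i * b i) := by
        simp [Finset.mul_sum]
    _ = ∑ i, ∑ j, a j * (S j i * b i) := Finset.sum_comm
    _ = ∑ i, b i * ∑ j, S i j * a j := by
        refine Finset.sum_congr rfl fun i _ => ?_
        rw [Finset.mul_sum]
        refine Finset.sum_congr rfl fun j _ => ?_
        rw [hs i j]; ring

open Matrix in
lemma spectral_key {m : ℕ} (S : Matrix (Fin m) (Fin m) ℝ) (hS : S.PosSemidef) (hne : S ≠ 0) :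
    0 < lamMinPos S ∧ ∀ w : Fin m → ℝ,
      (∀ u : Fin m → ℝ, S.mulVec u = 0 → ∑ k, w k * u k = 0) →
      lamMinPos S * sqnorm w ≤ ∑ k, w k * S.mulVec w k := by
  classical
  have hH : S.IsHermitian := hS.1
  set b : Fin m → Fin m → ℝ := fun i => ⇑(hH.eigenvectorBasis i) with hb
  set μ : Fin m → ℝ := hH.eigenvalues with hμ
  have hEig : ∀ i, S.mulVec (b i) = μ i • b i := fun i => hH.mulVec_eigenvectorBasis i
  have hOrtho : ∀ i j, ∑ k, b i k * b j k = if i = j then 1 else 0 := by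
    intro i j
    have h := hH.eigenvectorBasis.orthonormal
    rw [orthonormal_iff_ite] at h
    simpa [PiLp.inner_apply, b, mul_comm] using h i j
  have hExp : ∀ (w : Fin m → ℝ) (k : Fin m), w k = ∑ i, (∑ l, b i l * w l) * b i k := by
    intro w k
    have h := hH.eigenvectorBasis.sum_repr' (WithLp.toLp 2 w : EuclideanSpace ℝ (Fin m))
    have h2 := congrFun (congrArg (fun v : EuclideanSpace ℝ (Fin m) => (v : Fin m → ℝ)) h) k
    simp only [PiLp.inner_apply, RCLike.inner_apply, conj_trivial] at h2
    rw [← h2]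
    simp [b, WithLp.ofLp_sum, mul_comm]
  have hbne : ∀ i, b i ≠ 0 := by
    intro i h
    have h1 := hOrtho i i
    rw [h] at h1
    simp at h1
  have hsymm : ∀ k l, S k l = S l k := by
    intro k l
    have := congrFun (congrFun hH k) l
    simpa [Matrix.conjTranspose_apply] using this.symm
  have hgen : ∀ (v : Fin m → ℝ) (i : Fin m),
      ∑ l, b i l * (S.mulVec v) l = μ i * ∑ l, b i l * v l := by
    intro v i
    have : ∑ l, b i l * (S.mulVec v) l = ∑ t, (S.mulVec (b i)) t * v t := by
      simp only [Matrix.mulVec, dotProduct]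
      calc ∑ x, b i x * ∑ y, S x y * v y = ∑ x, ∑ y, b i x * (S x y * v y) := by
            simp [Finset.mul_sum]
        _ = ∑ y, ∑ x, b i x * (S x y * v y) := Finset.sum_comm
        _ = ∑ y, (∑ x, S y x * b i x) * v y := by
            refine Finset.sum_congr rfl fun y _ => ?_
            rw [Finset.sum_mul]
            refine Finset.sum_congr rfl fun x _ => ?_
            rw [hsymm y x]; ring
    rw [this, hEig i, Finset.mul_sum]
    refine Finset.sum_congr rfl fun t _ => ?_
    simp only [Pi.smul_apply, smul_eq_mul]; ring
  set Eset : Set ℝ := {c : ℝ | c ≠ 0 ∧ ∃ v : Fin m → ℝ, v ≠ 0 ∧ S.mulVec v = c • v} with hEset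
  have hlam : lamMinPos S = sInf Eset := rfl
  have hposE : ∀ c ∈ Eset, 0 < c := by
    rintro c ⟨hc, v, hv, heq⟩
    have h1 := hS.dotProduct_mulVec_nonneg v
    simp only [star_trivial] at h1
    rw [heq] at h1
    have h2 : v ⬝ᵥ c • v = c * (∑ i, v i * v i) := by
      simp [dotProduct, Finset.mul_sum]; congr 1; funext i; ring
    rw [h2] at h1
    have h3 : 0 < ∑ i, v i * v i := by
      obtain ⟨j, hj⟩ := Function.ne_iff.mp hv
      apply Finset.sum_pos' (fun i _ => mul_self_nonneg (v i))
        ⟨j, Finset.mem_univ j, mul_self_pos.mpr hj⟩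
    rcases lt_or_eq_of_le (by nlinarith : (0:ℝ) ≤ c) with h | h
    · exact h
    · exact absurd h.symm hc
  have hsubE : Eset ⊆ Set.range μ := by
    rintro c ⟨hc, v, hv, heq⟩
    have hex : ∃ j, (∑ l, b j l * v l) ≠ 0 := by
      by_contra hco
      push_neg at hco
      apply hv
      funext k
      rw [hExp v k]
      simp [hco]
    obtain ⟨j, hj⟩ := hex
    have h1 := hgen v j
    rw [heq] at h1
    have h2 : ∑ l, b j l * (c • v) l = c * ∑ l, b j l * v l := by
      rw [Finset.mul_sum]; congr 1; funext l; simp; ring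
    rw [h2] at h1
    exact ⟨j, by
      have := mul_right_cancel₀ hj h1.symm
      exact this⟩
  have hEfin : Eset.Finite := Set.Finite.subset (Set.finite_range μ) hsubE
  have hEne : Eset.Nonempty := by
    obtain ⟨v, t, ht, hv, hvec⟩ := hH.exists_eigenvector_of_ne_zero hne
    exact ⟨t, ht, v, hv, hvec⟩
  have hbdd : BddBelow Eset := ⟨0, fun c hc => (hposE c hc).le⟩
  have hmem : lamMinPos S ∈ Eset := by rw [hlam]; exact Set.Nonempty.csInf_mem hEne hEfin
  have hpos : 0 < lamMinPos S := hposE _ hmem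
  refine ⟨hpos, ?_⟩
  intro w hw
  have hle : ∀ i, μ i ≠ 0 → lamMinPos S ≤ μ i := by
    intro i hi
    rw [hlam]
    exact csInf_le hbdd ⟨hi, b i, hbne i, hEig i⟩
  set c : Fin m → ℝ := fun i => ∑ l, b i l * w l with hc
  have key1 : sqnorm w = ∑ i, c i ^ 2 := by
    unfold sqnorm
    calc ∑ k, w k ^ 2 = ∑ k, (∑ i, c i * b i k) * w k := by
          congr 1; funext k; rw [pow_two]; congr 1; exact hExp w k
      _ = ∑ k, ∑ i, c i * b i k * w k := by simp [Finset.sum_mul]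
      _ = ∑ i, ∑ k, c i * b i k * w k := Finset.sum_comm
      _ = ∑ i, c i * ∑ k, b i k * w k := by simp [Finset.mul_sum, mul_assoc]
      _ = ∑ i, c i ^ 2 := by
          refine Finset.sum_congr rfl fun i _ => ?_
          rw [pow_two]
  have key2 : ∑ k, w k * S.mulVec w k = ∑ i, μ i * c i ^ 2 := by
    calc ∑ k, w k * S.mulVec w k
        = ∑ k, (∑ i, c i * b i k) * S.mulVec w k := by
          refine Finset.sum_congr rfl fun k _ => ?_
          congr 1; exact hExp w k
      _ = ∑ k, ∑ i, c i * b i k * S.mulVec w k := by simp [Finset.sum_mul]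
      _ = ∑ i, ∑ k, c i * b i k * S.mulVec w k := Finset.sum_comm
      _ = ∑ i, c i * ∑ k, b i k * S.mulVec w k := by simp [Finset.mul_sum, mul_assoc]
      _ = ∑ i, c i * (μ i * c i) := by
          refine Finset.sum_congr rfl fun i _ => ?_
          rw [hgen w i]
      _ = ∑ i, μ i * c i ^ 2 := by
          refine Finset.sum_congr rfl fun i _ => ?_
          ring
  have key3 : ∀ i, μ i = 0 → c i = 0 := by
    intro i hi
    have hker : S.mulVec (b i) = 0 := by rw [hEig i, hi, zero_smul]
    have := hw (b i) hker
    calc c i = ∑ l, b i l * w l := rfl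
      _ = ∑ l, w l * b i l := by
          refine Finset.sum_congr rfl fun l _ => mul_comm _ _
      _ = 0 := this
  rw [key1, key2, Finset.mul_sum]
  refine Finset.sum_le_sum fun i _ => ?_
  rcases eq_or_ne (c i) 0 with h | h
  · simp [h]
  · have hμi : μ i ≠ 0 := fun h0 => h (key3 i h0)
    exact mul_le_mul_of_nonneg_right (hle i hμi) (sq_nonneg _)


/-- For the constrained elastic-net estimator `β̂^{(α)}` and its projection
`β̂_P` onto `{β : Σβ = ρ}`, one has `‖β̂_P − β*^{(α)}‖² ≤ 2(√d̄/α + M)√vₙ + vₙ`. -/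
theorem statement12 (dbar N : ℕ)
    (S : Matrix (Fin dbar) (Fin dbar) ℝ) (hSpsd : S.PosSemidef) (hSne : S ≠ 0)
    (hSmin : ∃ v : Fin dbar → ℝ, v ≠ 0 ∧ S.mulVec v = 0)
    (ρ : Fin dbar → ℝ) (hρ : ∃ w, S.mulVec w = ρ)
    (α : ℝ) (hα : 0 < α)
    (βstar : Fin dbar → ℝ)
    (hβstarFeas : S.mulVec βstar = ρ)
    (hβstarMin : ∀ β : Fin dbar → ℝ, S.mulVec β = ρ →
      l1norm βstar + α / 2 * sqnorm βstar ≤ l1norm β + α / 2 * sqnorm β)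
    (X : Matrix (Fin N) (Fin dbar) ℝ) (ε : Fin N → ℝ) (y : Fin N → ℝ)
    (hy : y = X.mulVec βstar + ε)
    (n : ℝ) (hn : 0 < n)
    (qn rn sn σ2 : ℝ) (hqn0 : 0 ≤ qn) (hrn0 : 0 ≤ rn) (hsn0 : 0 ≤ sn) (hσ20 : 0 ≤ σ2)
    (hqn : ∀ i j, |(∑ k, X k i * X k j) / n - S i j| ≤ qn)
    (hrn : ∀ j, |X.transpose.mulVec ε j / n| ≤ rn)
    (hsn : |sqnorm ε / n - σ2| ≤ sn)
    (M : ℝ) (hM : l1norm βstar ≤ M)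
    (βhat : Fin dbar → ℝ)
    (hβhatFeas : sqnorm (y - X.mulVec βhat) / n ≤ σ2 + sn ∧ l1norm βhat ≤ M)
    (hβhatMin : ∀ β : Fin dbar → ℝ,
      sqnorm (y - X.mulVec β) / n ≤ σ2 + sn → l1norm β ≤ M →
      l1norm βhat + α / 2 * sqnorm βhat ≤ l1norm β + α / 2 * sqnorm β)
    (βhatP : Fin dbar → ℝ)
    (hβhatPFeas : S.mulVec βhatP = ρ)
    (hβhatPProj : ∀ β : Fin dbar → ℝ, S.mulVec β = ρ →
      sqnorm (βhat - βhatP) ≤ sqnorm (βhat - β)) :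
    sqnorm (βhatP - βstar)
      ≤ 2 * (Real.sqrt dbar / α + M)
          * Real.sqrt ((4 * M * rn + 2 * sn + 4 * M ^ 2 * qn) / lamMinPos S)
        + (4 * M * rn + 2 * sn + 4 * M ^ 2 * qn) / lamMinPos S := by
  classical
  obtain ⟨hlamPos, hquad⟩ := spectral_key S hSpsd hSne
  have hM0 : 0 ≤ M := le_trans (l1norm_nonneg βstar) hM
  have hsymmS : ∀ i j, S i j = S j i := by
    intro i j
    have := congrFun (congrFun hSpsd.1 i) j
    simpa [Matrix.conjTranspose_apply] using this.symm
  set δ : Fin dbar → ℝ := βhat - βstar with hδdef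
  set w : Fin dbar → ℝ := βhat - βhatP with hwdef
  set u : Fin dbar → ℝ := βhatP - βstar with hudef
  have hu_ker : S.mulVec u = 0 := by
    rw [hudef, Matrix.mulVec_sub, hβhatPFeas, hβstarFeas, sub_self]
  -- orthogonality of w to the kernel
  have hw_orth : ∀ v : Fin dbar → ℝ, S.mulVec v = 0 → ∑ k, w k * v k = 0 := by
    intro v hv
    rcases eq_or_ne (sqnorm v) 0 with hQ | hQ
    · have hv0 : ∀ k, v k = 0 := by
        intro k
        have h := (Finset.sum_eq_zero_iff_of_nonneg
          (fun i _ => sq_nonneg (v i))).mp hQ k (Finset.mem_univ k)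
        exact (pow_eq_zero_iff (two_ne_zero)).mp h
      exact Finset.sum_eq_zero fun k _ => by rw [hv0 k, mul_zero]
    · have hQpos : 0 < sqnorm v := lt_of_le_of_ne (sqnorm_nonneg v) (Ne.symm hQ)
      set c := ∑ k, w k * v k with hcdef
      set t := c / sqnorm v with htdef
      have hfeas : S.mulVec (βhatP + t • v) = ρ := by
        rw [Matrix.mulVec_add, Matrix.mulVec_smul, hv, smul_zero, add_zero, hβhatPFeas]
      have hPr := hβhatPProj _ hfeas
      have heq : βhat - (βhatP + t • v) = w + (-t) • v := by
        funext k
        simp only [hwdef, Pi.sub_apply, Pi.add_apply, Pi.smul_apply, smul_eq_mul]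
        ring
      rw [heq, sqnorm_add_smul, ← hcdef] at hPr
      have h1 : 0 ≤ 2 * (-t) * c + (-t) ^ 2 * sqnorm v := by linarith
      have h2 : 2 * (-t) * c + (-t) ^ 2 * sqnorm v = -(c ^ 2 / sqnorm v) := by
        rw [htdef]; field_simp; ring
      have h3 : c ^ 2 / sqnorm v ≤ 0 := by linarith
      have h4 : c ^ 2 ≤ 0 := by
        have := mul_le_mul_of_nonneg_right h3 hQpos.le
        rwa [div_mul_cancel₀ _ hQ, zero_mul] at this
      exact (pow_eq_zero_iff (two_ne_zero)).mp (le_antisymm h4 (sq_nonneg c))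
  -- Step 1: quadratic form bound for δ
  have hl1δ : l1norm δ ≤ 2 * M := by
    rw [hδdef]
    exact le_trans (l1norm_sub_le _ _) (by linarith [hβhatFeas.2, hM])
  have hres : y - X.mulVec βhat = ε - X.mulVec δ := by
    rw [hy, hδdef, Matrix.mulVec_sub]
    abel
  have hipX : ∑ k, ε k * X.mulVec δ k = ∑ j, X.transpose.mulVec ε j * δ j := by
    simp only [Matrix.mulVec, dotProduct, Matrix.transpose_apply]
    calc ∑ k, ε k * ∑ j, X k j * δ j = ∑ k, ∑ j, ε k * (X k j * δ j) := by
          simp [Finset.mul_sum]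
      _ = ∑ j, ∑ k, ε k * (X k j * δ j) := Finset.sum_comm
      _ = ∑ j, (∑ k, X k j * ε k) * δ j := by
          refine Finset.sum_congr rfl fun j _ => ?_
          rw [Finset.sum_mul]
          exact Finset.sum_congr rfl fun k _ => by ring
  have hJ : |∑ j, X.transpose.mulVec ε j / n * δ j| ≤ rn * l1norm δ := by
    calc |∑ j, X.transpose.mulVec ε j / n * δ j|
        ≤ ∑ j, |X.transpose.mulVec ε j / n * δ j| := Finset.abs_sum_le_sum_abs _ _
      _ ≤ ∑ j, rn * |δ j| := Finset.sum_le_sum fun j _ => by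
          rw [abs_mul]
          exact mul_le_mul_of_nonneg_right (hrn j) (abs_nonneg _)
      _ = rn * l1norm δ := by simp [l1norm, Finset.mul_sum]
  have hsum_eq : ∑ k, ε k * X.mulVec δ k = n * ∑ j, X.transpose.mulVec ε j / n * δ j := by
    rw [hipX, Finset.mul_sum]
    refine Finset.sum_congr rfl fun j _ => ?_
    field_simp
  have hXδ : sqnorm (X.mulVec δ) / n ≤ 2 * sn + 4 * M * rn := by
    have hfeas1 := hβhatFeas.1
    rw [hres, sqnorm_sub, hsum_eq] at hfeas1
    rw [add_div, sub_div] at hfeas1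
    have hcancel : 2 * (n * ∑ j, X.transpose.mulVec ε j / n * δ j) / n
        = 2 * ∑ j, X.transpose.mulVec ε j / n * δ j := by
      field_simp
    rw [hcancel] at hfeas1
    have hεlow : σ2 - sn ≤ sqnorm ε / n := by
      have h := abs_le.mp hsn
      linarith [h.1]
    have hJ2 : ∑ j, X.transpose.mulVec ε j / n * δ j ≤ 2 * M * rn := by
      have h1 := (abs_le.mp hJ).2
      have h2 : rn * l1norm δ ≤ rn * (2 * M) := mul_le_mul_of_nonneg_left hl1δ hrn0
      linarith
    linarith
  have hSQ : ∑ j, δ j * S.mulVec δ j ≤ sqnorm (X.mulVec δ) / n + qn * (l1norm δ) ^ 2 := by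
    have e1 : ∑ j, δ j * S.mulVec δ j = ∑ j, ∑ i, δ j * δ i * S j i := by
      simp only [Matrix.mulVec, dotProduct]
      refine Finset.sum_congr rfl fun j _ => ?_
      rw [Finset.mul_sum]
      exact Finset.sum_congr rfl fun i _ => by ring
    have e2 : sqnorm (X.mulVec δ) = ∑ j, ∑ i, δ j * δ i * (∑ k, X k j * X k i) := by
      unfold sqnorm
      simp only [Matrix.mulVec, dotProduct]
      calc ∑ k, (∑ j, X k j * δ j) ^ 2
          = ∑ k, ∑ j, ∑ i, (X k j * δ j) * (X k i * δ i) := by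
            refine Finset.sum_congr rfl fun k _ => ?_
            rw [pow_two, Finset.sum_mul_sum]
        _ = ∑ j, ∑ k, ∑ i, (X k j * δ j) * (X k i * δ i) := Finset.sum_comm
        _ = ∑ j, ∑ i, ∑ k, (X k j * δ j) * (X k i * δ i) := by
            exact Finset.sum_congr rfl fun j _ => Finset.sum_comm
        _ = ∑ j, ∑ i, δ j * δ i * (∑ k, X k j * X k i) := by
            refine Finset.sum_congr rfl fun j _ => Finset.sum_congr rfl fun i _ => ?_
            rw [Finset.mul_sum]
            exact Finset.sum_congr rfl fun k _ => by ring
    have e3 : (l1norm δ) ^ 2 = ∑ j, ∑ i, |δ j| * |δ i| := by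
      unfold l1norm
      rw [pow_two, Finset.sum_mul_sum]
    rw [e1, e2, e3, Finset.sum_div, Finset.mul_sum, ← Finset.sum_add_distrib]
    refine Finset.sum_le_sum fun j _ => ?_
    rw [Finset.sum_div, Finset.mul_sum, ← Finset.sum_add_distrib]
    refine Finset.sum_le_sum fun i _ => ?_
    have hq : |S j i - (∑ k, X k j * X k i) / n| ≤ qn := by
      rw [abs_sub_comm]; exact hqn j i
    have key : δ j * δ i * S j i - δ j * δ i * (∑ k, X k j * X k i) / n
        ≤ qn * (|δ j| * |δ i|) := by
      have h0 : δ j * δ i * S j i - δ j * δ i * (∑ k, X k j * X k i) / n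
          = (δ j * δ i) * (S j i - (∑ k, X k j * X k i) / n) := by ring
      rw [h0]
      calc (δ j * δ i) * (S j i - (∑ k, X k j * X k i) / n)
          ≤ |(δ j * δ i) * (S j i - (∑ k, X k j * X k i) / n)| := le_abs_self _
        _ = |δ j| * |δ i| * |S j i - (∑ k, X k j * X k i) / n| := by
            rw [abs_mul, abs_mul]
        _ ≤ |δ j| * |δ i| * qn :=
            mul_le_mul_of_nonneg_left hq (by positivity)
        _ = qn * (|δ j| * |δ i|) := by ring
    linarith
  have hδw : ∑ j, δ j * S.mulVec δ j = ∑ j, w j * S.mulVec w j := by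
    have hδeq : δ = w + u := by
      funext k
      simp only [hδdef, hwdef, hudef, Pi.sub_apply, Pi.add_apply]
      ring
    rw [hδeq, Matrix.mulVec_add, hu_ker, add_zero]
    have hsplit : ∑ j, (w + u) j * S.mulVec w j
        = ∑ j, w j * S.mulVec w j + ∑ j, u j * S.mulVec w j := by
      rw [← Finset.sum_add_distrib]
      refine Finset.sum_congr rfl fun j _ => ?_
      simp only [Pi.add_apply]
      ring
    rw [hsplit, bilin_comm S hsymmS u w, hu_ker]
    simp
  have hwSw : ∑ j, w j * S.mulVec w j ≤ 4 * M * rn + 2 * sn + 4 * M ^ 2 * qn := by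
    rw [← hδw]
    have h1 : qn * (l1norm δ) ^ 2 ≤ qn * (2 * M) ^ 2 :=
      mul_le_mul_of_nonneg_left (pow_le_pow_left₀ (l1norm_nonneg δ) hl1δ 2) hqn0
    calc ∑ j, δ j * S.mulVec δ j ≤ sqnorm (X.mulVec δ) / n + qn * (l1norm δ) ^ 2 := hSQ
      _ ≤ (2 * sn + 4 * M * rn) + qn * (2 * M) ^ 2 := by linarith
      _ = 4 * M * rn + 2 * sn + 4 * M ^ 2 * qn := by ring
  set vn := (4 * M * rn + 2 * sn + 4 * M ^ 2 * qn) / lamMinPos S with hvndef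
  have hquadw := hquad w hw_orth
  have hsqw_vn : sqnorm w ≤ vn := by
    rw [hvndef, le_div_iff₀ hlamPos]
    calc sqnorm w * lamMinPos S = lamMinPos S * sqnorm w := mul_comm _ _
      _ ≤ _ := le_trans hquadw hwSw
  have hvn0 : 0 ≤ vn := le_trans (sqnorm_nonneg w) hsqw_vn
  set sv := Real.sqrt vn with hsvdef
  set sd := Real.sqrt (dbar : ℝ) with hsddef
  have hsv0 : 0 ≤ sv := Real.sqrt_nonneg _
  have hl1w : l1norm w ≤ sd * sv := by
    have h1 : (l1norm w) ^ 2 ≤ (dbar : ℝ) * vn :=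
      le_trans (sq_l1norm_le w) (mul_le_mul_of_nonneg_left hsqw_vn (Nat.cast_nonneg _))
    calc l1norm w = Real.sqrt ((l1norm w) ^ 2) := (Real.sqrt_sq (l1norm_nonneg w)).symm
      _ ≤ Real.sqrt ((dbar : ℝ) * vn) := Real.sqrt_le_sqrt h1
      _ = sd * sv := by rw [hsddef, hsvdef, Real.sqrt_mul (Nat.cast_nonneg _)]
  have hsqβhat : sqnorm βhat ≤ M ^ 2 :=
    le_trans (sqnorm_le_sq_l1norm βhat) (pow_le_pow_left₀ (l1norm_nonneg βhat) hβhatFeas.2 2)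
  have hipw : |∑ k, βhat k * w k| ≤ M * sv := by
    have h1 : (∑ k, βhat k * w k) ^ 2 ≤ M ^ 2 * vn := by
      calc (∑ k, βhat k * w k) ^ 2 ≤ sqnorm βhat * sqnorm w := by
            have h := Finset.sum_mul_sq_le_sq_mul_sq Finset.univ βhat w
            simpa [sqnorm] using h
        _ ≤ M ^ 2 * vn :=
            mul_le_mul hsqβhat hsqw_vn (sqnorm_nonneg w) (by positivity)
    calc |∑ k, βhat k * w k| = Real.sqrt ((∑ k, βhat k * w k) ^ 2) :=
          (Real.sqrt_sq_eq_abs _).symm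
      _ ≤ Real.sqrt (M ^ 2 * vn) := Real.sqrt_le_sqrt h1
      _ = M * sv := by rw [hsvdef, Real.sqrt_mul (sq_nonneg M), Real.sqrt_sq hM0]
  -- Step 4: f(βhat) ≤ f(βstar)
  have hfhat : l1norm βhat + α / 2 * sqnorm βhat ≤ l1norm βstar + α / 2 * sqnorm βstar := by
    apply hβhatMin
    · have hεres : y - X.mulVec βstar = ε := by rw [hy, add_sub_cancel_left]
      rw [hεres]
      have h := (abs_le.mp hsn).2
      linarith
    · exact hM
  -- Step 3: strong convexity at βstar
  set ip := ∑ k, βstar k * u k with hipdef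
  have hβPeq : βhatP = βstar + (1 : ℝ) • u := by
    funext k
    simp only [hudef, Pi.add_apply, Pi.smul_apply, Pi.sub_apply, smul_eq_mul]
    ring
  have hsqP : sqnorm βhatP = sqnorm βstar + 2 * ip + sqnorm u := by
    rw [hβPeq, sqnorm_add_smul, ← hipdef]
    ring
  have hseg : ∀ t : ℝ, 0 < t → t ≤ 1 →
      0 ≤ (l1norm βhatP - l1norm βstar + α * ip) + α * t / 2 * sqnorm u := by
    intro t ht0 ht1
    have hfeas : S.mulVec (βstar + t • u) = ρ := by
      rw [Matrix.mulVec_add, Matrix.mulVec_smul, hu_ker, smul_zero, add_zero, hβstarFeas]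
    have hmin := hβstarMin _ hfeas
    have hl1seg : l1norm (βstar + t • u) ≤ l1norm βstar + t * (l1norm βhatP - l1norm βstar) := by
      have hpt : ∀ k, |(βstar + t • u) k| ≤ (1 - t) * |βstar k| + t * |βhatP k| := by
        intro k
        have he : (βstar + t • u) k = (1 - t) * βstar k + t * βhatP k := by
          simp only [hudef, Pi.add_apply, Pi.smul_apply, Pi.sub_apply, smul_eq_mul]
          ring
        rw [he]
        calc |(1 - t) * βstar k + t * βhatP k| ≤ |(1 - t) * βstar k| + |t * βhatP k| :=
              abs_add_le _ _
          _ = (1 - t) * |βstar k| + t * |βhatP k| := by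
              rw [abs_mul, abs_mul, abs_of_nonneg (by linarith : (0:ℝ) ≤ 1 - t),
                abs_of_nonneg ht0.le]
      calc l1norm (βstar + t • u) = ∑ k, |(βstar + t • u) k| := rfl
        _ ≤ ∑ k, ((1 - t) * |βstar k| + t * |βhatP k|) := Finset.sum_le_sum fun k _ => hpt k
        _ = (1 - t) * l1norm βstar + t * l1norm βhatP := by
            unfold l1norm
            rw [Finset.sum_add_distrib, Finset.mul_sum, Finset.mul_sum]
        _ = l1norm βstar + t * (l1norm βhatP - l1norm βstar) := by ring
    have hsqseg := sqnorm_add_smul βstar u t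
    rw [← hipdef] at hsqseg
    rw [hsqseg] at hmin
    have h0 : 0 ≤ t * ((l1norm βhatP - l1norm βstar + α * ip) + α * t / 2 * sqnorm u) := by
      linarith [hmin, hl1seg]
    exact (mul_nonneg_iff_of_pos_left ht0).mp h0
  have hD : 0 ≤ l1norm βhatP - l1norm βstar + α * ip := by
    by_contra hcon
    push_neg at hcon
    have hQ0 : 0 ≤ sqnorm u := sqnorm_nonneg u
    have hden : 0 < α * sqnorm u + 1 := by positivity
    have hDpos : 0 < -(l1norm βhatP - l1norm βstar + α * ip) := by linarith
    set t := min 1 (-(l1norm βhatP - l1norm βstar + α * ip) / (α * sqnorm u + 1)) with htdef2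
    have ht0 : 0 < t := lt_min one_pos (div_pos hDpos hden)
    have ht1 : t ≤ 1 := min_le_left _ _
    have htle : t ≤ -(l1norm βhatP - l1norm βstar + α * ip) / (α * sqnorm u + 1) :=
      min_le_right _ _
    have hseg' := hseg t ht0 ht1
    have hmulle : t * (α * sqnorm u + 1) ≤ -(l1norm βhatP - l1norm βstar + α * ip) :=
      (le_div_iff₀ hden).mp htle
    linarith [hseg', hmulle, ht0]
  have hstrong : α / 2 * sqnorm u ≤
      (l1norm βhatP + α / 2 * sqnorm βhatP) - (l1norm βstar + α / 2 * sqnorm βstar) := by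
    rw [hsqP]
    linarith [hD]
  -- Step 5: compare f(βhatP) with f(βhat)
  have hβPsub : βhatP = βhat - w := by
    funext k
    simp only [hwdef, Pi.sub_apply]
    ring
  have hl1P : l1norm βhatP ≤ l1norm βhat + l1norm w := by
    rw [hβPsub]; exact l1norm_sub_le _ _
  have hsqP2 : sqnorm βhatP = sqnorm βhat - 2 * (∑ k, βhat k * w k) + sqnorm w := by
    rw [hβPsub, sqnorm_sub]
  have h4 : α / 2 * sqnorm βhatP
      = α / 2 * (sqnorm βhat - 2 * (∑ k, βhat k * w k) + sqnorm w) := by rw [hsqP2]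
  have h3 : α / 2 * (-(2 * (∑ k, βhat k * w k)) + sqnorm w) ≤ α / 2 * (2 * M * sv + vn) := by
    have hip1 := (abs_le.mp hipw).1
    exact mul_le_mul_of_nonneg_left (by linarith [hsqw_vn]) (by positivity)
  have hkey : α / 2 * sqnorm u ≤ sd * sv + α / 2 * (2 * M * sv + vn) := by
    linarith [hstrong, hfhat, h4, h3, hl1P, hl1w]
  -- conclusion
  have hrwgoal : 2 * (sd / α + M) * sv + vn = (2 * sd * sv + α * (2 * M * sv + vn)) / α := by
    field_simp
    ring
  rw [hrwgoal, le_div_iff₀ hα]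
  linarith [hkey]


end Statement12
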